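/- Let n, d be natural numbers, let Φ be a real n×d matrix, let c > 0 and Γ > 0 be real numbers, and let v, p ∈ ℝ^d with ‖p‖² ≤ Γ (Euclidean norm). Then |vᵀ p − (Φ v)ᵀ (Φ Φᵀ + c I)⁻¹ Φ p| ≤ √Γ · √(vᵀ v − (Φ v)ᵀ (Φ Φᵀ + c I)⁻¹ Φ v). -/

import Mathlib

open Matrix

lemma dp_self_nonneg {m : ℕ} (a : Fin m → ℝ) : 0 ≤ a ⬝ᵥ a :=
  Finset.sum_nonneg fun i _ => mul_self_nonneg _

-- Cauchy-Schwarz for dot products of real vectors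
lemma dotProduct_cauchy {m : ℕ} (a b : Fin m → ℝ) :
    |a ⬝ᵥ b| ≤ Real.sqrt (a ⬝ᵥ a) * Real.sqrt (b ⬝ᵥ b) := by
  have h := Finset.sum_mul_sq_le_sq_mul_sq Finset.univ a b
  have ha : ∑ i, a i ^ 2 = a ⬝ᵥ a := by simp [dotProduct, sq]
  have hb : ∑ i, b i ^ 2 = b ⬝ᵥ b := by simp [dotProduct, sq]
  rw [ha, hb] at h
  calc |a ⬝ᵥ b| = Real.sqrt ((a ⬝ᵥ b) ^ 2) := by rw [Real.sqrt_sq_eq_abs]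
    _ ≤ Real.sqrt ((a ⬝ᵥ a) * (b ⬝ᵥ b)) := Real.sqrt_le_sqrt h
    _ = Real.sqrt (a ⬝ᵥ a) * Real.sqrt (b ⬝ᵥ b) :=
        Real.sqrt_mul (dp_self_nonneg a) _

theorem lemma1_estimation_bound (n d : ℕ) (Φ : Matrix (Fin n) (Fin d) ℝ) (c Γ : ℝ)
    (hc : 0 < c) (hΓ : 0 < Γ) (v p : Fin d → ℝ) (hp : p ⬝ᵥ p ≤ Γ) :
    |v ⬝ᵥ p - (Φ *ᵥ v) ⬝ᵥ ((Φ * Φᵀ + c • (1 : Matrix (Fin n) (Fin n) ℝ))⁻¹ *ᵥ (Φ *ᵥ p))| ≤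
      Real.sqrt Γ *
        Real.sqrt (v ⬝ᵥ v -
          (Φ *ᵥ v) ⬝ᵥ ((Φ * Φᵀ + c • (1 : Matrix (Fin n) (Fin n) ℝ))⁻¹ *ᵥ (Φ *ᵥ v))) := by
  set A : Matrix (Fin n) (Fin n) ℝ := Φ * Φᵀ + c • 1 with hAdef
  set B : Matrix (Fin d) (Fin d) ℝ := Φᵀ * Φ + c • 1 with hBdef
  have hsmul : ∀ m : ℕ, (c • (1 : Matrix (Fin m) (Fin m) ℝ)).PosDef := by
    intro m
    rw [smul_one_eq_diagonal]
    exact Matrix.PosDef.diagonal (fun i => hc)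
  have hΦt : Φᴴ = Φᵀ := conjTranspose_eq_transpose_of_trivial Φ
  have hA : A.PosDef := by
    have h1 := posSemidef_self_mul_conjTranspose Φ
    rw [hΦt] at h1
    exact Matrix.PosDef.posSemidef_add h1 (hsmul n)
  have hB : B.PosDef := by
    have h1 := posSemidef_conjTranspose_mul_self Φ
    rw [hΦt] at h1
    exact Matrix.PosDef.posSemidef_add h1 (hsmul d)
  have hAd : IsUnit A.det := isUnit_iff_ne_zero.2 hA.det_pos.ne'
  have hBd : IsUnit B.det := isUnit_iff_ne_zero.2 hB.det_pos.ne'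
  -- push-through identity
  have hpush : Φᵀ * A = B * Φᵀ := by
    simp [hAdef, hBdef, Matrix.mul_add, Matrix.add_mul, Matrix.mul_smul, Matrix.smul_mul,
      Matrix.mul_assoc]
  have hpush2 : Φᵀ * A⁻¹ = B⁻¹ * Φᵀ := by
    calc Φᵀ * A⁻¹ = (B⁻¹ * B) * (Φᵀ * A⁻¹) := by
          rw [Matrix.nonsing_inv_mul _ hBd, Matrix.one_mul]
      _ = B⁻¹ * ((B * Φᵀ) * A⁻¹) := by simp [Matrix.mul_assoc]
      _ = B⁻¹ * ((Φᵀ * A) * A⁻¹) := by rw [hpush]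
      _ = B⁻¹ * Φᵀ := by
          rw [Matrix.mul_assoc Φᵀ, Matrix.mul_nonsing_inv _ hAd, Matrix.mul_one]
  -- key identity : 1 - Φᵀ A⁻¹ Φ = c • B⁻¹
  have hM : (1 : Matrix (Fin d) (Fin d) ℝ) - Φᵀ * A⁻¹ * Φ = c • B⁻¹ := by
    have h1 : Φᵀ * A⁻¹ * Φ = B⁻¹ * (Φᵀ * Φ) := by rw [hpush2, Matrix.mul_assoc]
    have h2 : Φᵀ * Φ = B - c • 1 := by rw [hBdef, add_sub_cancel_right]
    rw [h1, h2, Matrix.mul_sub, Matrix.nonsing_inv_mul _ hBd]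
    rw [Matrix.mul_smul, Matrix.mul_one]
    abel
  -- rewriting the bilinear form through Φ
  have key : ∀ w q : Fin d → ℝ,
      (Φ *ᵥ w) ⬝ᵥ (A⁻¹ *ᵥ (Φ *ᵥ q)) = w ⬝ᵥ ((Φᵀ * A⁻¹ * Φ) *ᵥ q) := by
    intro w q
    rw [mulVec_mulVec, dotProduct_mulVec, dotProduct_mulVec, ← vecMul_transpose,
      vecMul_vecMul, Matrix.mul_assoc]
  have hquad : ∀ w q : Fin d → ℝ,
      w ⬝ᵥ q - (Φ *ᵥ w) ⬝ᵥ (A⁻¹ *ᵥ (Φ *ᵥ q)) = c * (w ⬝ᵥ (B⁻¹ *ᵥ q)) := by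
    intro w q
    rw [key, ← dotProduct_sub]
    have : q - (Φᵀ * A⁻¹ * Φ) *ᵥ q = ((1 : Matrix (Fin d) (Fin d) ℝ) - Φᵀ * A⁻¹ * Φ) *ᵥ q := by
      rw [Matrix.sub_mulVec, Matrix.one_mulVec]
    rw [this, hM, smul_mulVec, dotProduct_smul, smul_eq_mul]
  -- square root of B⁻¹
  have hCpd : (B⁻¹).PosDef := hB.inv
  have hCps : (B⁻¹).PosSemidef := hCpd.posSemidef
  set S : Matrix (Fin d) (Fin d) ℝ := (open scoped MatrixOrder in CFC.sqrt B⁻¹) with hSdef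
  have hS : S * S = B⁻¹ := (open scoped MatrixOrder in CFC.sqrt_mul_sqrt_self B⁻¹ hCps.nonneg)
  have hSt : Sᵀ = S := by
    rw [← conjTranspose_eq_transpose_of_trivial]
    exact (open scoped MatrixOrder in (Matrix.nonneg_iff_posSemidef.mp (CFC.sqrt_nonneg B⁻¹))).isHermitian
  have hsplit : ∀ w q : Fin d → ℝ, w ⬝ᵥ (B⁻¹ *ᵥ q) = (S *ᵥ w) ⬝ᵥ (S *ᵥ q) := by
    intro w q
    rw [← hS, ← mulVec_mulVec, dotProduct_mulVec]
    nth_rewrite 1 [← hSt]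
    rw [vecMul_transpose]
  -- bound on the p-quadratic form
  have hApos : 0 ≤ (Φ *ᵥ p) ⬝ᵥ (A⁻¹ *ᵥ (Φ *ᵥ p)) := by
    have := hA.inv.posSemidef.dotProduct_mulVec_nonneg (Φ *ᵥ p)
    simpa using this
  have hpbound : c * (p ⬝ᵥ (B⁻¹ *ᵥ p)) ≤ Γ := by
    have h1 := hquad p p
    nlinarith [dp_self_nonneg p]
  -- final chain
  have hveq : v ⬝ᵥ v - (Φ *ᵥ v) ⬝ᵥ (A⁻¹ *ᵥ (Φ *ᵥ v)) = c * (v ⬝ᵥ (B⁻¹ *ᵥ v)) := hquad v v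
  rw [hquad v p, hveq, hsplit, hsplit]
  set a : Fin d → ℝ := S *ᵥ v
  set b : Fin d → ℝ := S *ᵥ p
  have hpb : c * (b ⬝ᵥ b) ≤ Γ := by rw [hsplit p p] at hpbound; exact hpbound
  calc |c * (a ⬝ᵥ b)| = c * |a ⬝ᵥ b| := by rw [abs_mul, abs_of_pos hc]
    _ ≤ c * (Real.sqrt (a ⬝ᵥ a) * Real.sqrt (b ⬝ᵥ b)) := by
        exact mul_le_mul_of_nonneg_left (dotProduct_cauchy a b) hc.le
    _ = Real.sqrt (c * (b ⬝ᵥ b)) * Real.sqrt (c * (a ⬝ᵥ a)) := by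
        rw [Real.sqrt_mul hc.le, Real.sqrt_mul hc.le]
        have h9 : Real.sqrt c * Real.sqrt (b ⬝ᵥ b) * (Real.sqrt c * Real.sqrt (a ⬝ᵥ a)) =
            Real.sqrt c * Real.sqrt c * (Real.sqrt (a ⬝ᵥ a) * Real.sqrt (b ⬝ᵥ b)) := by ring
        rw [h9, Real.mul_self_sqrt hc.le]
    _ ≤ Real.sqrt Γ * Real.sqrt (c * (a ⬝ᵥ a)) := by
        exact mul_le_mul_of_nonneg_right (Real.sqrt_le_sqrt hpb) (Real.sqrt_nonneg _)
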